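/- Let R be a commutative ring, 𝒢 a group, and τ ∈ 𝒢 an element such that the subgroup generated by τ is normal in 𝒢. In the group algebra R[𝒢], let I denote the left ideal generated by τ − 1. Then I is a two-sided ideal, and for every k ≥ 1 the k-th power of I (the R-submodule of R[𝒢] spanned by all products of k elements of I) equals the left ideal generated by (τ − 1)^k. -/

import Mathlib

section Aux

variable (R : Type) [CommRing R] (𝒢 : Type) [Group 𝒢] (τ : 𝒢)

lemma aux_comm_zpow (m : ℤ) :
    Commute (MonoidAlgebra.of R 𝒢 (τ ^ m)) (MonoidAlgebra.of R 𝒢 τ - 1) :=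
  (((Commute.refl τ).zpow_left m).map (MonoidAlgebra.of R 𝒢)).sub_right (Commute.one_right _)

lemma aux_zpow_sub_one (n : ℤ) :
    ∃ v : MonoidAlgebra R 𝒢,
      MonoidAlgebra.of R 𝒢 (τ ^ n) - 1 = v * (MonoidAlgebra.of R 𝒢 τ - 1) ∧
      Commute v (MonoidAlgebra.of R 𝒢 τ - 1) := by
  induction n using Int.induction_on with
  | zero => exact ⟨0, by rw [zpow_zero, map_one, sub_self, zero_mul], Commute.zero_left _⟩
  | succ n ih =>
      obtain ⟨v, hv, hc⟩ := ih
      refine ⟨MonoidAlgebra.of R 𝒢 (τ ^ (n : ℤ)) + v, ?_, (aux_comm_zpow R 𝒢 τ n).add_left hc⟩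
      have h1 : τ ^ ((n : ℤ) + 1) = τ ^ (n : ℤ) * τ := by rw [zpow_add_one]
      rw [h1, map_mul, add_mul, ← hv, mul_sub, mul_one]
      abel
  | pred n ih =>
      obtain ⟨v, hv, hc⟩ := ih
      refine ⟨v - MonoidAlgebra.of R 𝒢 (τ ^ (-(n : ℤ) - 1)), ?_,
        hc.sub_left (aux_comm_zpow R 𝒢 τ (-(n : ℤ) - 1))⟩
      have h1 : τ ^ (-(n : ℤ)) = τ ^ (-(n : ℤ) - 1) * τ := by
        rw [← zpow_add_one]; ring_nf
      rw [sub_mul, ← hv, mul_sub, mul_one, ← map_mul, ← h1]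
      abel

lemma aux_a_mul_of (hτ : (Subgroup.zpowers τ).Normal) (g : 𝒢) :
    ∃ w : MonoidAlgebra R 𝒢,
      (MonoidAlgebra.of R 𝒢 τ - 1) * MonoidAlgebra.of R 𝒢 g
        = MonoidAlgebra.of R 𝒢 g * w * (MonoidAlgebra.of R 𝒢 τ - 1) ∧
      Commute w (MonoidAlgebra.of R 𝒢 τ - 1) := by
  obtain ⟨n, hn⟩ := hτ.conj_mem τ (Subgroup.mem_zpowers τ) g⁻¹
  obtain ⟨v, hv, hc⟩ := aux_zpow_sub_one R 𝒢 τ n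
  refine ⟨v, ?_, hc⟩
  have hn' : τ ^ n = g⁻¹ * τ * g⁻¹⁻¹ := hn
  have hτg : τ * g = g * τ ^ n := by
    rw [hn']; group
  rw [sub_mul, one_mul, ← map_mul, hτg, map_mul, mul_assoc, ← hv, mul_sub, mul_one]

lemma aux_pow_mul_of (hτ : (Subgroup.zpowers τ).Normal) (k : ℕ) (g : 𝒢) :
    ∃ e : MonoidAlgebra R 𝒢,
      (MonoidAlgebra.of R 𝒢 τ - 1) ^ k * MonoidAlgebra.of R 𝒢 g
        = e * (MonoidAlgebra.of R 𝒢 τ - 1) ^ k := by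
  induction k with
  | zero => exact ⟨MonoidAlgebra.of R 𝒢 g, by simp⟩
  | succ k ih =>
      obtain ⟨e, he⟩ := ih
      obtain ⟨w, hw, hcw⟩ := aux_a_mul_of R 𝒢 τ hτ g
      refine ⟨e * w, ?_⟩
      have hwk : (MonoidAlgebra.of R 𝒢 τ - 1) ^ k * w
          = w * (MonoidAlgebra.of R 𝒢 τ - 1) ^ k := ((hcw.pow_right k).symm).eq
      calc (MonoidAlgebra.of R 𝒢 τ - 1) ^ (k + 1) * MonoidAlgebra.of R 𝒢 g
          = (MonoidAlgebra.of R 𝒢 τ - 1) ^ k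
              * ((MonoidAlgebra.of R 𝒢 τ - 1) * MonoidAlgebra.of R 𝒢 g) := by
            rw [pow_succ, mul_assoc]
        _ = (MonoidAlgebra.of R 𝒢 τ - 1) ^ k
              * (MonoidAlgebra.of R 𝒢 g * w * (MonoidAlgebra.of R 𝒢 τ - 1)) := by rw [hw]
        _ = ((MonoidAlgebra.of R 𝒢 τ - 1) ^ k * MonoidAlgebra.of R 𝒢 g)
              * (w * (MonoidAlgebra.of R 𝒢 τ - 1)) := by
            simp only [mul_assoc]
        _ = e * (MonoidAlgebra.of R 𝒢 τ - 1) ^ k * (w * (MonoidAlgebra.of R 𝒢 τ - 1)) := by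
            rw [he]
        _ = e * w * (MonoidAlgebra.of R 𝒢 τ - 1) ^ (k + 1) := by
            rw [pow_succ]; simp only [mul_assoc, ← hwk]; rw [← mul_assoc ((MonoidAlgebra.of R 𝒢 τ - 1)^k) w]
            simp only [hwk, mul_assoc]

lemma aux_pow_mul (hτ : (Subgroup.zpowers τ).Normal) (k : ℕ) (d : MonoidAlgebra R 𝒢) :
    ∃ e : MonoidAlgebra R 𝒢,
      (MonoidAlgebra.of R 𝒢 τ - 1) ^ k * d = e * (MonoidAlgebra.of R 𝒢 τ - 1) ^ k := by
  induction d using MonoidAlgebra.induction_on with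
  | of g => exact aux_pow_mul_of R 𝒢 τ hτ k g
  | add f g hf hg =>
      obtain ⟨e1, h1⟩ := hf
      obtain ⟨e2, h2⟩ := hg
      exact ⟨e1 + e2, by rw [mul_add, h1, h2, add_mul]⟩
  | smul r f hf =>
      obtain ⟨e, he⟩ := hf
      exact ⟨r • e, by rw [mul_smul_comm, he, smul_mul_assoc]⟩

end Aux

theorem pow_augmentation_ideal_of_normal_zpowers
    (R : Type) [CommRing R] (𝒢 : Type) [Group 𝒢] (τ : 𝒢)
    (hτ : (Subgroup.zpowers τ).Normal) :
    (∀ x ∈ Ideal.span {MonoidAlgebra.of R 𝒢 τ - 1},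
        ∀ y : MonoidAlgebra R 𝒢, x * y ∈ Ideal.span {MonoidAlgebra.of R 𝒢 τ - 1}) ∧
    ∀ k : ℕ, 1 ≤ k →
      ((Ideal.span {MonoidAlgebra.of R 𝒢 τ - 1}).restrictScalars R) ^ k =
        (Ideal.span {(MonoidAlgebra.of R 𝒢 τ - 1) ^ k}).restrictScalars R := by
  set a : MonoidAlgebra R 𝒢 := MonoidAlgebra.of R 𝒢 τ - 1 with ha
  constructor
  · intro x hx y
    obtain ⟨c, hc⟩ := Ideal.mem_span_singleton'.mp hx
    obtain ⟨e, he⟩ := aux_pow_mul R 𝒢 τ hτ 1 y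
    rw [pow_one, ← ha] at he
    refine Ideal.mem_span_singleton'.mpr ⟨c * e, ?_⟩
    rw [← hc, mul_assoc, ← he, ← mul_assoc]
  · intro k hk
    induction k, hk using Nat.le_induction with
    | base => simp [pow_one]
    | succ k hk ih =>
        rw [pow_succ, ih]
        apply le_antisymm
        · refine Submodule.mul_le.mpr ?_
          intro x hx y hy
          rw [Submodule.restrictScalars_mem] at hx hy
          obtain ⟨c, hc⟩ := Ideal.mem_span_singleton'.mp hx
          obtain ⟨d, hd⟩ := Ideal.mem_span_singleton'.mp hy
          rw [Submodule.restrictScalars_mem]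
          obtain ⟨e, he⟩ := aux_pow_mul R 𝒢 τ hτ k d
          rw [← ha] at he
          refine Ideal.mem_span_singleton'.mpr ⟨c * e, ?_⟩
          rw [← hc, ← hd, pow_succ]
          calc c * e * ((a) ^ k * a) = c * (e * a ^ k) * a := by
                simp only [mul_assoc]
            _ = c * (a ^ k * d) * a := by rw [← he]
            _ = c * a ^ k * (d * a) := by simp only [mul_assoc]
        · intro z hz
          rw [Submodule.restrictScalars_mem] at hz
          obtain ⟨c, hc⟩ := Ideal.mem_span_singleton'.mp hz
          have h1 : c * a ^ k ∈ (Ideal.span {a ^ k}).restrictScalars R :=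
            Ideal.mem_span_singleton'.mpr ⟨c, rfl⟩
          have h2 : a ∈ (Ideal.span {a}).restrictScalars R :=
            Ideal.subset_span rfl
          have := Submodule.mul_mem_mul h1 h2
          rwa [show c * a ^ k * a = z by rw [← hc, pow_succ, mul_assoc]] at this
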